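/- arXiv:1508.01783 — 4 statements merged into one kernel-verified Lean document; each statement's English description precedes it below -/
import Mathlib

section
/- If μᵢ < b for every i ∈ {1, …, k}, set S := Σ_{i=1}^k 1/(b − μᵢ) > 0. Then max_{z ∈ Δ} g(z) = b − 1/S, and g attains its maximum on Δ at exactly one point y, given by yᵢ = 1/(S (b − μᵢ)) for each i; in particular yᵢ > 0 for every i, so y lies in the relative interior of Δ. -/
/-- if `μᵢ < b` for every `i`, then with `S = ∑ᵢ 1/(b - μᵢ) > 0` one has
`max_{Δ} g = b - 1/S`, attained at exactly one point `y`, with `yᵢ = 1/(S (b - μᵢ)) > 0`. -/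
theorem stmt_2 (k : ℕ) (hk : 2 ≤ k) (b : ℝ) (hb : 0 < b)
    (μ : Fin k → ℝ) (hμ : ∀ i, 0 < μ i)
    (g : (Fin k → ℝ) → ℝ)
    (hg : ∀ z, g z = b + ∑ i, z i ^ 2 * (μ i - b))
    (Δ : Set (Fin k → ℝ)) (hΔ : Δ = {z | (∀ i, 0 ≤ z i) ∧ ∑ i, z i = 1})
    (hμb : ∀ i, μ i < b)
    (S : ℝ) (hS : S = ∑ i, 1 / (b - μ i)) :
    0 < S ∧
    IsGreatest (g '' Δ) (b - 1 / S) ∧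
    (∀ i, 0 < 1 / (S * (b - μ i))) ∧
    (∀ z ∈ Δ, (IsMaxOn g Δ z ↔ z = fun i => 1 / (S * (b - μ i)))) := by
  have hkpos : 0 < k := by omega
  haveI : Nonempty (Fin k) := Fin.pos_iff_nonempty.mp hkpos
  have hcpos : ∀ i, 0 < b - μ i := fun i => sub_pos.mpr (hμb i)
  have hSpos : 0 < S := by
    rw [hS]
    exact Finset.sum_pos (fun i _ => by have := hcpos i; positivity) Finset.univ_nonempty
  have hSne : S ≠ 0 := ne_of_gt hSpos
  set y : Fin k → ℝ := fun i => 1 / (S * (b - μ i)) with hy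
  have hypos : ∀ i, 0 < y i := fun i => by
    have := hcpos i; simp only [hy]; positivity
  have hysum : ∑ i, y i = 1 := by
    have : ∀ i ∈ Finset.univ, y i = (1 / S) * (1 / (b - μ i)) := by
      intro i _; simp only [hy]; field_simp
    rw [Finset.sum_congr rfl this, ← Finset.mul_sum, ← hS]
    field_simp
  have hcy : ∀ i, (b - μ i) * y i = 1 / S := by
    intro i
    have := (hcpos i).ne'
    simp only [hy]; field_simp
  have hgz : ∀ z : Fin k → ℝ, g z = b - ∑ i, (b - μ i) * z i ^ 2 := by
    intro z
    rw [hg, show ∑ i, z i ^ 2 * (μ i - b) = -∑ i, (b - μ i) * z i ^ 2 by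
      rw [← Finset.sum_neg_distrib]; exact Finset.sum_congr rfl fun i _ => by ring]
    ring
  have key : ∀ z : Fin k → ℝ, (∑ i, z i = 1) →
      ∑ i, (b - μ i) * z i ^ 2 = 1 / S + ∑ i, (b - μ i) * (z i - y i) ^ 2 := by
    intro z hz
    have expand : ∀ i ∈ Finset.univ, (b - μ i) * (z i - y i) ^ 2 =
        (b - μ i) * z i ^ 2 - 2 * ((b - μ i) * y i) * z i + ((b - μ i) * y i) * y i := by
      intro i _; ring
    rw [Finset.sum_congr rfl expand]
    simp only [hcy]
    rw [Finset.sum_add_distrib, Finset.sum_sub_distrib, ← Finset.mul_sum, ← Finset.mul_sum,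
      hz, hysum]
    ring
  have hymem : y ∈ Δ := by
    rw [hΔ]; exact ⟨fun i => (hypos i).le, hysum⟩
  have hgy : g y = b - 1 / S := by
    rw [hgz, key y hysum]
    simp
  have hub : ∀ z ∈ Δ, g z ≤ b - 1 / S := by
    intro z hz
    rw [hΔ] at hz
    rw [hgz, key z hz.2]
    have : 0 ≤ ∑ i, (b - μ i) * (z i - y i) ^ 2 :=
      Finset.sum_nonneg fun i _ => by have := (hcpos i).le; positivity
    linarith
  refine ⟨hSpos, ⟨⟨y, hymem, hgy⟩, ?_⟩, fun i => hypos i, ?_⟩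
  · rintro v ⟨z, hz, rfl⟩
    exact hub z hz
  · intro z hz
    constructor
    · intro hmax
      have h1 : g y ≤ g z := hmax hymem
      rw [hΔ] at hz
      rw [hgy, hgz, key z hz.2] at h1
      have hsum0 : ∑ i, (b - μ i) * (z i - y i) ^ 2 = 0 := by
        have : 0 ≤ ∑ i, (b - μ i) * (z i - y i) ^ 2 :=
          Finset.sum_nonneg fun i _ => by have := (hcpos i).le; positivity
        linarith
      funext i
      have hterm : (b - μ i) * (z i - y i) ^ 2 = 0 := by
        have hnn : ∀ j ∈ Finset.univ, 0 ≤ (b - μ j) * (z j - y j) ^ 2 :=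
          fun j _ => by have := (hcpos j).le; positivity
        exact (Finset.sum_eq_zero_iff_of_nonneg hnn).mp hsum0 i (Finset.mem_univ i)
      have : (z i - y i) ^ 2 = 0 := by
        rcases mul_eq_zero.mp hterm with h | h
        · exact absurd h (hcpos i).ne'
        · exact h
      have := pow_eq_zero_iff (n := 2) (by norm_num) |>.mp this
      have : z i = y i := by linarith
      simpa [hy] using this
    · rintro rfl
      intro w hw
      simp only [Set.mem_setOf_eq]
      calc g w ≤ b - 1 / S := hub w hw
        _ = g y := hgy.symm
end

section
/- If max_{1≤i≤k} μᵢ > b, then f_max = max_{1≤i≤k} μᵢ, and the maximizers of f on the unit sphere S^{k−1} are exactly the vectors ±e_i (where e_i is the i-th standard basis vector of ℝ^k), over those indices i with μᵢ = max_{1≤j≤k} μⱼ. -/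
/-- if `max μᵢ > b`, then `f_max = max μᵢ` and the maximizers of `f` on the unit
sphere are exactly the vectors `±e_i` over the indices `i` with `μ i` maximal. -/
theorem stmt_4 (k : ℕ) (hk : 2 ≤ k) (b : ℝ) (hb : 0 < b)
    (μ : Fin k → ℝ) (hμ : ∀ i, 0 < μ i)
    (f : (Fin k → ℝ) → ℝ)
    (hf : ∀ x, f x = ∑ i, μ i * x i ^ 4 +
      b * ∑ i, ∑ j ∈ Finset.univ.erase i, x i ^ 2 * x j ^ 2)
    (S : Set (Fin k → ℝ)) (hS : S = {x | ∑ i, x i ^ 2 = 1})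
    (fmax : ℝ) (hfmax : IsGreatest (f '' S) fmax)
    (M : ℝ) (hM : IsGreatest (Set.range μ) M) (hbM : b < M) :
    fmax = M ∧
    (∀ x ∈ S, (IsMaxOn f S x ↔
      ∃ i, μ i = M ∧ (x = Pi.single i 1 ∨ x = Pi.single i (-1)))) := by
  have hμM : ∀ i, μ i ≤ M := fun i => hM.2 ⟨i, rfl⟩
  -- key formula on the sphere
  have key : ∀ x : Fin k → ℝ, x ∈ S → f x = ∑ i, (μ i - b) * x i ^ 4 + b := by
    intro x hx
    rw [hS] at hx
    simp only [Set.mem_setOf_eq] at hx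
    rw [hf]
    have h1 : ∀ i : Fin k, ∑ j ∈ Finset.univ.erase i, x i ^ 2 * x j ^ 2
        = x i ^ 2 - x i ^ 4 := by
      intro i
      rw [← Finset.mul_sum, Finset.sum_erase_eq_sub (Finset.mem_univ i), hx]
      ring
    rw [Finset.sum_congr rfl (fun i _ => h1 i)]
    have h2 : ∑ i, (x i ^ 2 - x i ^ 4) = 1 - ∑ i, x i ^ 4 := by
      rw [Finset.sum_sub_distrib, hx]
    have h3 : ∑ i, (μ i - b) * x i ^ 4
        = ∑ i, μ i * x i ^ 4 - b * ∑ i, x i ^ 4 := by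
      rw [Finset.mul_sum, ← Finset.sum_sub_distrib]
      exact Finset.sum_congr rfl (fun i _ => by ring)
    rw [h2, h3]; ring
  have sq_le_one : ∀ x : Fin k → ℝ, x ∈ S → ∀ i, x i ^ 2 ≤ 1 := by
    intro x hx i
    rw [hS] at hx
    simp only [Set.mem_setOf_eq] at hx
    calc x i ^ 2 ≤ ∑ j, x j ^ 2 :=
          Finset.single_le_sum (fun j _ => sq_nonneg (x j)) (Finset.mem_univ i)
      _ = 1 := hx
  -- termwise bound
  have term_le : ∀ x : Fin k → ℝ, x ∈ S → ∀ i : Fin k,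
      (μ i - b) * x i ^ 4 ≤ (M - b) * x i ^ 2 := by
    intro x hx i
    have h1 := sq_le_one x hx i
    have h2 := hμM i
    have ha : 0 ≤ (M - μ i) * x i ^ 4 := mul_nonneg (by linarith) (by positivity)
    have hb2 : 0 ≤ (M - b) * (x i ^ 2 * (1 - x i ^ 2)) :=
      mul_nonneg (by linarith) (mul_nonneg (sq_nonneg _) (by linarith))
    nlinarith [ha, hb2]
  -- upper bound
  have ub : ∀ x ∈ S, f x ≤ M := by
    intro x hx
    have hx' : ∑ i, x i ^ 2 = 1 := by rw [hS] at hx; exact hx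
    rw [key x hx]
    have : ∑ i, (μ i - b) * x i ^ 4 ≤ ∑ i, (M - b) * x i ^ 2 :=
      Finset.sum_le_sum (fun i _ => term_le x hx i)
    rw [← Finset.mul_sum, hx'] at this
    linarith
  -- value at ±eᵢ
  have single_mem : ∀ (i : Fin k) (c : ℝ), c ^ 2 = 1 → (Pi.single i c : Fin k → ℝ) ∈ S := by
    intro i c hc
    rw [hS]
    simp only [Set.mem_setOf_eq]
    rw [Finset.sum_eq_single i]
    · rw [Pi.single_eq_same, hc]
    · intro j _ hj; rw [Pi.single_eq_of_ne hj]; ring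
    · intro h; exact absurd (Finset.mem_univ i) h
  have single_val : ∀ (i : Fin k) (c : ℝ), c ^ 2 = 1 → f (Pi.single i c) = μ i := by
    intro i c hc
    rw [key _ (single_mem i c hc)]
    rw [Finset.sum_eq_single i]
    · rw [Pi.single_eq_same]
      have : c ^ 4 = 1 := by nlinarith
      rw [this]; ring
    · intro j _ hj; rw [Pi.single_eq_of_ne hj]; ring
    · intro h; exact absurd (Finset.mem_univ i) h
  obtain ⟨i₀, hi₀⟩ := hM.1
  have he1 : (1:ℝ) ^ 2 = 1 := by norm_num
  have hM_attained : f (Pi.single i₀ 1) = M := by rw [single_val i₀ 1 he1, hi₀]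
  have hfmaxM : fmax = M := by
    obtain ⟨x, hx, hxe⟩ := hfmax.1
    have h1 : fmax ≤ M := hxe ▸ ub x hx
    have h2 : M ≤ fmax := hM_attained ▸ hfmax.2 ⟨_, single_mem i₀ 1 he1, rfl⟩
    linarith
  -- equality case
  have eq_case : ∀ x ∈ S, f x = M →
      ∃ i, μ i = M ∧ (x = Pi.single i 1 ∨ x = Pi.single i (-1)) := by
    intro x hx hfx
    have hx' : ∑ i, x i ^ 2 = 1 := by rw [hS] at hx; exact hx
    have hsum0 : ∑ i, ((M - b) * x i ^ 2 - (μ i - b) * x i ^ 4) = 0 := by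
      rw [Finset.sum_sub_distrib, ← Finset.mul_sum, hx']
      have := key x hx
      rw [hfx] at this
      linarith
    have hterm0 : ∀ i ∈ Finset.univ, (M - b) * x i ^ 2 - (μ i - b) * x i ^ 4 = 0 := by
      rw [← Finset.sum_eq_zero_iff_of_nonneg (fun i _ => sub_nonneg.2 (term_le x hx i))]
      exact hsum0
    -- find i with x i ≠ 0
    have : ∃ i, x i ≠ 0 := by
      by_contra h
      push_neg at h
      have : ∑ i : Fin k, x i ^ 2 = 0 := by
        apply Finset.sum_eq_zero; intro i _; rw [h i]; ring
      rw [hx'] at this; norm_num at this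
    obtain ⟨i, hxi⟩ := this
    have hxi2 : 0 < x i ^ 2 := by positivity
    have h0 := hterm0 i (Finset.mem_univ i)
    have hle1 := sq_le_one x hx i
    have hμi := hμM i
    -- From h0 : (M-b) x² = (μᵢ-b) x⁴ ≤ (M-b) x⁴, so x² ≥ 1, hence x² = 1 and μᵢ = M
    have hA : 0 ≤ (M - μ i) * x i ^ 4 := mul_nonneg (by linarith) (by positivity)
    have hge : 1 ≤ x i ^ 2 := by
      nlinarith [hA, mul_pos (sub_pos.2 hbM) hxi2]
    have hxi1 : x i ^ 2 = 1 := le_antisymm hle1 hge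
    have hx4 : x i ^ 4 = 1 := by
      rw [show x i ^ 4 = (x i ^ 2) ^ 2 by ring, hxi1]; norm_num
    have hμiM : μ i = M := by rw [hx4, hxi1] at h0; linarith
    -- other coordinates vanish
    have hrest : ∀ j, j ≠ i → x j = 0 := by
      intro j hj
      have hsum : ∑ l ∈ Finset.univ.erase i, x l ^ 2 = 0 := by
        rw [Finset.sum_erase_eq_sub (Finset.mem_univ i), hx', hxi1]; ring
      have := (Finset.sum_eq_zero_iff_of_nonneg (fun l _ => sq_nonneg (x l))).1 hsum j
        (Finset.mem_erase.2 ⟨hj, Finset.mem_univ j⟩)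
      exact pow_eq_zero_iff (by norm_num) |>.1 this
    have hxpm : x i = 1 ∨ x i = -1 := by
      have h5 : (x i - 1) * (x i + 1) = 0 := by linear_combination hxi1
      rcases mul_eq_zero.1 h5 with h | h
      · left; linarith
      · right; linarith
    refine ⟨i, hμiM, ?_⟩
    have hxeq : x = Pi.single i (x i) := by
      funext j
      by_cases hji : j = i
      · subst hji; rw [Pi.single_eq_same]
      · rw [Pi.single_eq_of_ne hji, hrest j hji]
    rcases hxpm with h | h
    · left; rw [hxeq, h]
    · right; rw [hxeq, h]
  refine ⟨hfmaxM, fun x hx => ⟨?_, ?_⟩⟩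
  · intro hmax
    have h1 : f x ≤ M := ub x hx
    have h2 : M ≤ f x := hM_attained ▸ hmax (single_mem i₀ 1 he1)
    exact eq_case x hx (le_antisymm h1 h2)
  · rintro ⟨i, hiM, (rfl | rfl)⟩ <;> intro y hy
    · rw [single_val i 1 (by norm_num), hiM]; exact ub y hy
    · rw [single_val i (-1) (by norm_num), hiM]; exact ub y hy
end

section
/- If μᵢ < b for every i ∈ {1, …, k}, then f_max = b − (Σ_{j=1}^k 1/(b − μⱼ))^{−1}; in particular f_max < b. Moreover, the maximizers of f on the unit sphere S^{k−1} are exactly the points x ∈ ℝ^k with xᵢ² = (b − f_max)/(b − μᵢ) for every i, i.e. xᵢ = ±((b − f_max)/(b − μᵢ))^{1/2} with arbitrary independent choices of signs. -/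
/-- if `μᵢ < b` for every `i`, then `f_max = b - (∑ⱼ 1/(b - μⱼ))⁻¹ < b`, and the
maximizers of `f` on the unit sphere are exactly the points `x` with
`xᵢ² = (b - f_max)/(b - μᵢ)` for every `i`. -/
theorem stmt_5 (k : ℕ) (hk : 2 ≤ k) (b : ℝ) (hb : 0 < b)
    (μ : Fin k → ℝ) (hμ : ∀ i, 0 < μ i)
    (f : (Fin k → ℝ) → ℝ)
    (hf : ∀ x, f x = ∑ i, μ i * x i ^ 4 +
      b * ∑ i, ∑ j ∈ Finset.univ.erase i, x i ^ 2 * x j ^ 2)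
    (S : Set (Fin k → ℝ)) (hS : S = {x | ∑ i, x i ^ 2 = 1})
    (fmax : ℝ) (hfmax : IsGreatest (f '' S) fmax)
    (hμb : ∀ i, μ i < b) :
    fmax = b - (∑ j, 1 / (b - μ j))⁻¹ ∧
    fmax < b ∧
    (∀ x ∈ S, (IsMaxOn f S x ↔ ∀ i, x i ^ 2 = (b - fmax) / (b - μ i))) := by
  have hcpos : ∀ i, 0 < b - μ i := fun i => sub_pos.mpr (hμb i)
  have hne : (Finset.univ : Finset (Fin k)).Nonempty :=
    Finset.univ_nonempty_iff.mpr ⟨⟨0, by omega⟩⟩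
  have hT : 0 < ∑ j, 1 / (b - μ j) :=
    Finset.sum_pos (fun i _ => by have := hcpos i; positivity) hne
  set T : ℝ := ∑ j, 1 / (b - μ j) with hTdef
  set m : ℝ := T⁻¹ with hmdef
  have hm : 0 < m := inv_pos.mpr hT
  have hmT : ∑ i, m / (b - μ i) = 1 := by
    have : ∑ i, m / (b - μ i) = m * T := by
      rw [hTdef, Finset.mul_sum]
      exact Finset.sum_congr rfl fun i _ => by rw [div_eq_mul_inv, one_div]
    rw [this, hmdef, inv_mul_cancel₀ hT.ne']
  -- main identity
  have key : ∀ x : Fin k → ℝ, (∑ i, x i ^ 2 = 1) →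
      f x = b - m - ∑ i, (b - μ i) * (x i ^ 2 - m / (b - μ i)) ^ 2 := by
    intro x hx
    have hdouble : ∑ i, ∑ j ∈ Finset.univ.erase i, x i ^ 2 * x j ^ 2
        = 1 - ∑ i, (x i ^ 2) ^ 2 := by
      have h1 : ∀ i : Fin k, ∑ j ∈ Finset.univ.erase i, x i ^ 2 * x j ^ 2
          = x i ^ 2 * (1 - x i ^ 2) := by
        intro i
        rw [← Finset.mul_sum, Finset.sum_erase_eq_sub (Finset.mem_univ i), hx]
      rw [Finset.sum_congr rfl fun i _ => h1 i]
      have : ∑ i, x i ^ 2 * (1 - x i ^ 2)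
          = (∑ i, x i ^ 2) - ∑ i, (x i ^ 2) ^ 2 := by
        rw [← Finset.sum_sub_distrib]
        exact Finset.sum_congr rfl fun i _ => by ring
      rw [this, hx]
    have hexp : ∑ i, (b - μ i) * (x i ^ 2 - m / (b - μ i)) ^ 2
        = (∑ i, (b - μ i) * (x i ^ 2) ^ 2) - 2 * m * (∑ i, x i ^ 2)
          + m * ∑ i, m / (b - μ i) := by
      rw [Finset.mul_sum, Finset.mul_sum, ← Finset.sum_sub_distrib,
        ← Finset.sum_add_distrib]
      refine Finset.sum_congr rfl fun i _ => ?_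
      have h := (hcpos i).ne'
      field_simp
      ring
    rw [hf x, hdouble, hexp, hx, hmT]
    have : ∑ i, μ i * x i ^ 4 = ∑ i, (μ i * (x i ^ 2) ^ 2) := by
      refine Finset.sum_congr rfl fun i _ => by ring
    rw [this]
    have hsplit : ∑ i, (b - μ i) * (x i ^ 2) ^ 2
        = b * ∑ i, (x i ^ 2) ^ 2 - ∑ i, μ i * (x i ^ 2) ^ 2 := by
      rw [Finset.mul_sum, ← Finset.sum_sub_distrib]
      exact Finset.sum_congr rfl fun i _ => by ring
    rw [hsplit]
    ring
  -- upper bound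
  have hub : ∀ x ∈ S, f x ≤ b - m := by
    intro x hx
    rw [hS] at hx
    rw [key x hx]
    have : 0 ≤ ∑ i, (b - μ i) * (x i ^ 2 - m / (b - μ i)) ^ 2 :=
      Finset.sum_nonneg fun i _ => by have := hcpos i; positivity
    linarith
  -- the maximizing point
  set x₀ : Fin k → ℝ := fun i => Real.sqrt (m / (b - μ i)) with hx₀def
  have hx₀sq : ∀ i, x₀ i ^ 2 = m / (b - μ i) := by
    intro i
    rw [hx₀def]
    exact Real.sq_sqrt (by have := hcpos i; positivity)
  have hx₀S : x₀ ∈ S := by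
    rw [hS]
    show ∑ i, x₀ i ^ 2 = 1
    rw [Finset.sum_congr rfl fun i _ => hx₀sq i, hmT]
  have hx₀f : f x₀ = b - m := by
    have hx0 : ∑ i, x₀ i ^ 2 = 1 := by
      rw [Finset.sum_congr rfl fun i _ => hx₀sq i, hmT]
    rw [key x₀ hx0]
    have : ∑ i, (b - μ i) * (x₀ i ^ 2 - m / (b - μ i)) ^ 2 = 0 := by
      refine Finset.sum_eq_zero fun i _ => ?_
      rw [hx₀sq i]
      ring
    rw [this]; ring
  have hfmaxval : fmax = b - m := by
    have h1 : fmax ≤ b - m := by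
      obtain ⟨x, hxS, hxf⟩ := hfmax.1
      rw [← hxf]; exact hub x hxS
    have h2 : b - m ≤ fmax := by
      rw [← hx₀f]
      exact hfmax.2 ⟨x₀, hx₀S, rfl⟩
    linarith
  refine ⟨hfmaxval, by rw [hfmaxval]; linarith, ?_⟩
  intro x hxS
  have hx : ∑ i, x i ^ 2 = 1 := by rw [hS] at hxS; exact hxS
  have hbf : b - fmax = m := by rw [hfmaxval]; ring
  rw [hbf]
  constructor
  · intro hmax
    have hfx : f x = b - m := by
      have h1 : f x ≤ b - m := hub x hxS
      have h2 : b - m ≤ f x := by rw [← hx₀f]; exact hmax hx₀S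
      linarith
    have hsum0 : ∑ i, (b - μ i) * (x i ^ 2 - m / (b - μ i)) ^ 2 = 0 := by
      have := key x hx
      rw [hfx] at this
      linarith
    intro i
    have := (Finset.sum_eq_zero_iff_of_nonneg
      (fun i _ => by have := hcpos i; positivity : ∀ i ∈ Finset.univ,
        (0:ℝ) ≤ (b - μ i) * (x i ^ 2 - m / (b - μ i)) ^ 2)).mp hsum0 i
      (Finset.mem_univ i)
    have h2 : (x i ^ 2 - m / (b - μ i)) ^ 2 = 0 := by
      rcases mul_eq_zero.mp this with h | h
      · exact absurd h (hcpos i).ne'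
      · exact h
    have := pow_eq_zero_iff (n := 2) (by norm_num) |>.mp h2
    linarith
  · intro hxi
    have hfx : f x = b - m := by
      rw [key x hx]
      have : ∑ i, (b - μ i) * (x i ^ 2 - m / (b - μ i)) ^ 2 = 0 := by
        refine Finset.sum_eq_zero fun i _ => ?_
        rw [hxi i]; ring
      rw [this]; ring
    intro y hyS
    calc f y ≤ b - m := hub y hyS
    _ = f x := hfx.symm
end

section
/- If max_{1≤i≤k} μᵢ = b, then f_max = b, and the maximizers of f on the unit sphere S^{k−1} are exactly the unit vectors x with xᵢ = 0 for every index i such that μᵢ < b. -/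
lemma stmt6_key (k : ℕ) (b : ℝ) (μ : Fin k → ℝ)
    (f : (Fin k → ℝ) → ℝ)
    (hf : ∀ x, f x = ∑ i, μ i * x i ^ 4 +
      b * ∑ i, ∑ j ∈ Finset.univ.erase i, x i ^ 2 * x j ^ 2)
    (x : Fin k → ℝ) (hx : ∑ i, x i ^ 2 = 1) :
    f x = b + ∑ i, (μ i - b) * x i ^ 4 := by
  have h1 : ∀ i : Fin k, ∑ j ∈ Finset.univ.erase i, x i ^ 2 * x j ^ 2
      = x i ^ 2 - x i ^ 4 := by
    intro i
    rw [← Finset.mul_sum, Finset.sum_erase_eq_sub (Finset.mem_univ i), hx]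
    ring
  rw [hf x]
  rw [Finset.sum_congr rfl (fun i _ => h1 i)]
  simp only [sub_mul, Finset.sum_sub_distrib, hx]
  rw [← Finset.mul_sum]
  ring

/-- if `max μᵢ = b`, then `f_max = b` and the maximizers of `f` on the unit sphere
are exactly the unit vectors `x` with `xᵢ = 0` for every index `i` with `μᵢ < b`. -/
theorem stmt_6 (k : ℕ) (hk : 2 ≤ k) (b : ℝ) (hb : 0 < b)
    (μ : Fin k → ℝ) (hμ : ∀ i, 0 < μ i)
    (f : (Fin k → ℝ) → ℝ)
    (hf : ∀ x, f x = ∑ i, μ i * x i ^ 4 +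
      b * ∑ i, ∑ j ∈ Finset.univ.erase i, x i ^ 2 * x j ^ 2)
    (S : Set (Fin k → ℝ)) (hS : S = {x | ∑ i, x i ^ 2 = 1})
    (fmax : ℝ) (hfmax : IsGreatest (f '' S) fmax)
    (hMb : IsGreatest (Set.range μ) b) :
    fmax = b ∧
    (∀ x ∈ S, (IsMaxOn f S x ↔ ∀ i, μ i < b → x i = 0)) := by
  have hμle : ∀ i, μ i ≤ b := fun i => hMb.2 ⟨i, rfl⟩
  have hmemS : ∀ x, x ∈ S ↔ ∑ i, x i ^ 2 = 1 := by
    intro x; rw [hS]; rfl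
  have hterm : ∀ (x : Fin k → ℝ) (i : Fin k), (μ i - b) * x i ^ 4 ≤ 0 := by
    intro x i
    apply mul_nonpos_of_nonpos_of_nonneg
    · linarith [hμle i]
    · positivity
  have hbound : ∀ x ∈ S, f x ≤ b := by
    intro x hx
    rw [stmt6_key k b μ f hf x ((hmemS x).1 hx)]
    have : ∑ i, (μ i - b) * x i ^ 4 ≤ 0 :=
      Finset.sum_nonpos (fun i _ => hterm x i)
    linarith
  obtain ⟨i0, hi0⟩ := hMb.1
  set x0 : Fin k → ℝ := fun j => if j = i0 then 1 else 0 with hx0def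
  have hx0S : x0 ∈ S := by
    rw [hmemS]
    have : ∀ j : Fin k, x0 j ^ 2 = if j = i0 then 1 else 0 := by
      intro j; by_cases h : j = i0 <;> simp [hx0def, h]
    rw [Finset.sum_congr rfl (fun j _ => this j)]
    simp
  have hfx0 : f x0 = b := by
    rw [stmt6_key k b μ f hf x0 ((hmemS x0).1 hx0S)]
    have : ∀ j : Fin k, (μ j - b) * x0 j ^ 4 = if j = i0 then μ i0 - b else 0 := by
      intro j; simp only [hx0def]; split <;> simp_all
    rw [Finset.sum_congr rfl (fun j _ => this j)]
    simp [hi0]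
  have hfmaxb : fmax = b := by
    apply le_antisymm
    · obtain ⟨y, hy, hyf⟩ := hfmax.1
      rw [← hyf]; exact hbound y hy
    · rw [← hfx0]; exact hfmax.2 ⟨x0, hx0S, rfl⟩
  refine ⟨hfmaxb, fun x hx => ?_⟩
  constructor
  · intro hmax i hib
    have hfx : f x = b := by
      have h1 : b ≤ f x := hfx0 ▸ hmax hx0S
      exact le_antisymm (hbound x hx) h1
    have hsum0 : ∑ j, (μ j - b) * x j ^ 4 = 0 := by
      have := stmt6_key k b μ f hf x ((hmemS x).1 hx)
      linarith
    have := (Finset.sum_eq_zero_iff_of_nonpos (fun j _ => hterm x j)).1 hsum0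
      i (Finset.mem_univ i)
    have hx4 : x i ^ 4 = 0 := by
      rcases mul_eq_zero.1 this with h | h
      · exfalso; linarith
      · exact h
    exact pow_eq_zero_iff (by norm_num) |>.1 hx4
  · intro hcond
    have hfx : f x = b := by
      rw [stmt6_key k b μ f hf x ((hmemS x).1 hx)]
      have : ∀ j : Fin k, (μ j - b) * x j ^ 4 = 0 := by
        intro j
        rcases lt_or_ge (μ j) b with h | h
        · rw [hcond j h]; ring
        · have : μ j = b := le_antisymm (hμle j) h
          rw [this]; ring
      rw [Finset.sum_congr rfl (fun j _ => this j)]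
      simp
    intro y hy
    have : f y ≤ b := hbound y hy
    simp only [Set.mem_setOf_eq] at *
    rw [hfx]
    exact this
end
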